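/- Let Ω be a properly convex open set, γ ∈ Aut(Ω), and x ∈ Ω. Any accumulation point of the orbit (γⁿ·x)_{n∈ℕ} which lies in ∂Ω and is an extremal point of Ω is a fixed point of γ. -/

import Mathlib

open Set Filter Projectivization MeasureTheory

/-- The real vector space `ℝ^{n+1}` underlying the projective space `P^n`. -/
abbrev PV (n : ℕ) := Fin (n+1) → ℝ

/-- The real projective space `P^n = P(ℝ^{n+1})`. -/
abbrev PS (n : ℕ) := Projectivization ℝ (PV n)

/-- The quotient topology on projective space. -/
noncomputable instance (n : ℕ) : TopologicalSpace (PS n) :=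
  TopologicalSpace.coinduced (Projectivization.mk' ℝ) inferInstance

/-- `SL_{n+1}(ℝ)`, the group of projective transformations of `P^n`. -/
abbrev SL (n : ℕ) := Matrix.SpecialLinearGroup (Fin (n+1)) ℝ

instance (n : ℕ) : TopologicalSpace (SL n) :=
  TopologicalSpace.induced (fun g => (g : Matrix (Fin (n+1)) (Fin (n+1)) ℝ)) inferInstance

/-- The action of `SL_{n+1}(ℝ)` on `P^n` by projective transformations. -/
noncomputable def pact {n : ℕ} (g : SL n) (x : PS n) : PS n :=
  Projectivization.mk ℝ ((g : Matrix (Fin (n+1)) (Fin (n+1)) ℝ).mulVec x.rep) (by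
    intro h
    apply x.rep_nonzero
    have h2 : ((g⁻¹ : SL n) : Matrix (Fin (n+1)) (Fin (n+1)) ℝ).mulVec
        (((g : SL n) : Matrix (Fin (n+1)) (Fin (n+1)) ℝ).mulVec x.rep) = x.rep := by
      rw [Matrix.mulVec_mulVec, ← Matrix.SpecialLinearGroup.coe_mul, inv_mul_cancel,
        Matrix.SpecialLinearGroup.coe_one, Matrix.one_mulVec]
    rw [← h2, h, Matrix.mulVec_zero])

/-- The Funk (asymmetric) distance of a convex set `S` in a real vector space,
expressed through the Minkowski gauge: `F(x,y) = - log (1 - gauge_{S-x}(y-x))`. -/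
noncomputable def funkDist {E : Type*} [AddCommGroup E] [Module ℝ E] (S : Set E) (x y : E) : ℝ :=
  - Real.log (1 - gauge ((fun z => z - x) '' S) (y - x))

/-- The Hilbert (cross-ratio) distance of a convex set `S` in a real vector space:
`d_S(x,y) = (1/2) log ([p:x:y:q])`, equal to the symmetrization of the Funk distance. -/
noncomputable def hilbertDist {E : Type*} [AddCommGroup E] [Module ℝ E] (S : Set E) (x y : E) : ℝ :=
  (funkDist S x y + funkDist S y x) / 2

/-- The affine chart of `P^n` associated with a linear form `f`: the point `x` is sent to
the representative `v` of `x` normalized so that `f v = 1` (well defined whenever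
`f` does not vanish on representatives of `x`). -/
noncomputable def chart {n : ℕ} (f : PV n →ₗ[ℝ] ℝ) (x : PS n) : PV n := (f x.rep)⁻¹ • x.rep

/-- `Ω` is a properly convex open subset of `P^n`, as witnessed by the affine chart given by
`f`: the closure of `Ω` avoids the projective hyperplane `{f = 0}`, and in the affine
chart `{f = 1}`, `Ω` is a bounded convex open set. -/
structure IsPCOWith {n : ℕ} (f : PV n →ₗ[ℝ] ℝ) (Ω : Set (PS n)) : Prop where
  nonempty : Ω.Nonempty
  isOpen : IsOpen Ω
  avoids : ∀ x ∈ closure Ω, f x.rep ≠ 0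
  convex : Convex ℝ (chart f '' Ω)
  bounded : Bornology.IsBounded (chart f '' Ω)

/-- The Hilbert distance on a properly convex open set `Ω ⊆ P^n`, computed in the affine
chart given by `f` (independent of the chart, by projective invariance of the cross-ratio). -/
noncomputable def phdist {n : ℕ} (f : PV n →ₗ[ℝ] ℝ) (Ω : Set (PS n)) (x y : PS n) : ℝ :=
  hilbertDist (chart f '' Ω) (chart f x) (chart f y)

/-- `g` preserves `Ω`, i.e. `g` belongs to `Aut(Ω)`. -/
def InAut {n : ℕ} (g : SL n) (Ω : Set (PS n)) : Prop := pact g '' Ω = Ω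

/-- `Ω` is strictly convex: its boundary `∂Ω` contains no nontrivial segment
(read in the affine chart given by `f`). -/
def StrictlyConvexW {n : ℕ} (f : PV n →ₗ[ℝ] ℝ) (Ω : Set (PS n)) : Prop :=
  ∀ p ∈ frontier Ω, ∀ q ∈ frontier Ω,
    segment ℝ (chart f p) (chart f q) ⊆ chart f '' (frontier Ω) → p = q

/-- `∂Ω` is of class `C¹`: at every boundary point the supporting affine hyperplane of `Ω`
(in the affine chart given by `f`) is unique, i.e. any two supporting linear forms agree up
to positive scaling and adding a multiple of `f`. -/
def C1BoundaryW {n : ℕ} (f : PV n →ₗ[ℝ] ℝ) (Ω : Set (PS n)) : Prop :=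
  ∀ p ∈ frontier Ω, ∀ u v : PV n →ₗ[ℝ] ℝ,
    (∀ y ∈ Ω, u (chart f y) < u (chart f p)) → (∀ y ∈ Ω, v (chart f y) < v (chart f p)) →
    ∃ c d : ℝ, 0 < c ∧ v = c • u + d • f

/-- `p` is an extremal point of `∂Ω`: it is not in the interior of any nontrivial
segment contained in `∂Ω` (read in the affine chart given by `f`). -/
def IsExtremalPointW {n : ℕ} (f : PV n →ₗ[ℝ] ℝ) (Ω : Set (PS n)) (p : PS n) : Prop :=
  p ∈ frontier Ω ∧ ∀ q ∈ frontier Ω, ∀ r ∈ frontier Ω,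
    chart f p ∈ openSegment ℝ (chart f q) (chart f r) → q = r

/-- The translation distance `τ(g) = inf_{x ∈ Ω} d_Ω(x, g x)`. -/
noncomputable def transDist {n : ℕ} (f : PV n →ₗ[ℝ] ℝ) (Ω : Set (PS n)) (g : SL n) : ℝ :=
  ⨅ x : Ω, phdist f Ω x.1 (pact g x.1)

/-- `g` is elliptic: it fixes a point of `Ω`. -/
def IsEllipticW {n : ℕ} (Ω : Set (PS n)) (g : SL n) : Prop := ∃ x ∈ Ω, pact g x = x

/-- `g` is hyperbolic: its translation distance is positive and attained. -/
def IsHyperbolicW {n : ℕ} (f : PV n →ₗ[ℝ] ℝ) (Ω : Set (PS n)) (g : SL n) : Prop :=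
  ∃ m : ℝ, 0 < m ∧ (∀ y ∈ Ω, m ≤ phdist f Ω y (pact g y)) ∧
    ∃ x₀ ∈ Ω, phdist f Ω x₀ (pact g x₀) = m

/-- `g` is parabolic: its translation distance is `0` and is not attained. -/
def IsParabolicW {n : ℕ} (f : PV n →ₗ[ℝ] ℝ) (Ω : Set (PS n)) (g : SL n) : Prop :=
  (∀ y ∈ Ω, 0 < phdist f Ω y (pact g y)) ∧
    ∀ ε : ℝ, 0 < ε → ∃ y ∈ Ω, phdist f Ω y (pact g y) < ε

section Aux
variable {n : ℕ}

lemma aux_mk_smul {v : PV n} (hv : v ≠ 0) {c : ℝ} (hc : c ≠ 0) (h2 : c • v ≠ 0) :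
    Projectivization.mk ℝ (c • v) h2 = Projectivization.mk ℝ v hv := by
  rw [Projectivization.mk_eq_mk_iff]
  exact ⟨Units.mk0 c hc, rfl⟩

lemma aux_rep_mk {v : PV n} (hv : v ≠ 0) :
    ∃ a : ℝˣ, (a : ℝ) • v = (Projectivization.mk ℝ v hv).rep :=
  Projectivization.exists_smul_eq_mk_rep ℝ v hv

lemma aux_chart_mk (f : PV n →ₗ[ℝ] ℝ) {v : PV n} (hv : v ≠ 0) :
    chart f (Projectivization.mk ℝ v hv) = (f v)⁻¹ • v := by
  obtain ⟨a, ha⟩ := aux_rep_mk hv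
  rw [chart, ← ha, _root_.map_smul, smul_smul]
  congr 1
  have h0 := a.ne_zero
  rw [smul_eq_mul, mul_inv, mul_comm, ← mul_assoc, mul_inv_cancel₀ h0, one_mul]

lemma aux_f_chart (f : PV n →ₗ[ℝ] ℝ) {y : PS n} (hy : f y.rep ≠ 0) : f (chart f y) = 1 := by
  rw [chart, _root_.map_smul, smul_eq_mul, inv_mul_cancel₀ hy]

lemma aux_chart_ne_zero (f : PV n →ₗ[ℝ] ℝ) {y : PS n} (hy : f y.rep ≠ 0) : chart f y ≠ 0 := by
  intro h
  have := aux_f_chart f hy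
  rw [h, map_zero] at this
  norm_num at this

lemma aux_mk_chart (f : PV n →ₗ[ℝ] ℝ) {y : PS n} (hy : f y.rep ≠ 0) (h2 : chart f y ≠ 0) :
    Projectivization.mk ℝ (chart f y) h2 = y := by
  have : Projectivization.mk ℝ (chart f y) h2
      = Projectivization.mk ℝ y.rep y.rep_nonzero := by
    exact aux_mk_smul y.rep_nonzero (inv_ne_zero hy) h2
  rw [this, Projectivization.mk_rep]

lemma aux_mulVec_ne_zero (g : SL n) {v : PV n} (hv : v ≠ 0) :
    (g : Matrix (Fin (n+1)) (Fin (n+1)) ℝ).mulVec v ≠ 0 := by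
  intro h
  apply hv
  have h2 : ((g⁻¹ : SL n) : Matrix (Fin (n+1)) (Fin (n+1)) ℝ).mulVec
      (((g : SL n) : Matrix (Fin (n+1)) (Fin (n+1)) ℝ).mulVec v) = v := by
    rw [Matrix.mulVec_mulVec, ← Matrix.SpecialLinearGroup.coe_mul, inv_mul_cancel,
      Matrix.SpecialLinearGroup.coe_one, Matrix.one_mulVec]
  rw [← h2, h, Matrix.mulVec_zero]

lemma aux_pact_mk (g : SL n) {v : PV n} (hv : v ≠ 0) :
    pact g (Projectivization.mk ℝ v hv)
      = Projectivization.mk ℝ ((g : Matrix (Fin (n+1)) (Fin (n+1)) ℝ).mulVec v)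
        (aux_mulVec_ne_zero g hv) := by
  obtain ⟨a, ha⟩ := aux_rep_mk hv
  rw [pact]
  have h1 : ((g : SL n) : Matrix (Fin (n+1)) (Fin (n+1)) ℝ).mulVec
      ((Projectivization.mk ℝ v hv).rep) = (a : ℝ) •
      ((g : SL n) : Matrix (Fin (n+1)) (Fin (n+1)) ℝ).mulVec v := by
    rw [← ha, Matrix.mulVec_smul]
  simp_rw [h1]
  exact aux_mk_smul (aux_mulVec_ne_zero g hv) a.ne_zero _

lemma aux_pact_mul (g h : SL n) (y : PS n) : pact (g * h) y = pact g (pact h y) := by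
  conv_lhs => rw [← y.mk_rep]
  conv_rhs => rw [← y.mk_rep]
  rw [aux_pact_mk, aux_pact_mk, aux_pact_mk, Projectivization.mk_eq_mk_iff]
  refine ⟨1, ?_⟩
  rw [one_smul, Matrix.mulVec_mulVec, Matrix.SpecialLinearGroup.coe_mul]

lemma aux_pact_one (y : PS n) : pact (1 : SL n) y = y := by
  conv_lhs => rw [← y.mk_rep]
  rw [aux_pact_mk]
  conv_rhs => rw [← y.mk_rep]
  rw [Projectivization.mk_eq_mk_iff]
  exact ⟨1, by rw [one_smul, Matrix.SpecialLinearGroup.coe_one, Matrix.one_mulVec]⟩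

end Aux
section Aux2
variable {n : ℕ}

lemma aux_continuous_mk' : Continuous (Projectivization.mk' ℝ : {v : PV n // v ≠ 0} → PS n) :=
  continuous_coinduced_rng

lemma aux_f_cont (f : PV n →ₗ[ℝ] ℝ) : Continuous f :=
  LinearMap.continuous_of_finiteDimensional f

lemma aux_mulVec_cont (M : Matrix (Fin (n+1)) (Fin (n+1)) ℝ) :
    Continuous (fun v : PV n => M.mulVec v) := by
  have : (fun v : PV n => M.mulVec v) = fun v => M.mulVecLin v := by
    funext v; rfl
  rw [this]
  exact LinearMap.continuous_of_finiteDimensional _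

lemma aux_continuous_pact (g : SL n) : Continuous (pact g) := by
  apply continuous_coinduced_dom.mpr
  have : (pact g ∘ Projectivization.mk' ℝ : {v : PV n // v ≠ 0} → PS n)
      = fun v => Projectivization.mk' ℝ
        ⟨(g : Matrix (Fin (n+1)) (Fin (n+1)) ℝ).mulVec v.1, aux_mulVec_ne_zero g v.2⟩ := by
    funext v
    simp only [Function.comp_apply, Projectivization.mk'_eq_mk]
    rw [aux_pact_mk]
  rw [this]
  exact aux_continuous_mk'.comp (((aux_mulVec_cont _).comp continuous_subtype_val).subtype_mk _)

lemma aux_rep_mul_ne {v : PV n} (hv : v ≠ 0) (f : PV n →ₗ[ℝ] ℝ) :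
    f ((Projectivization.mk ℝ v hv).rep) ≠ 0 ↔ f v ≠ 0 := by
  obtain ⟨a, ha⟩ := aux_rep_mk hv
  rw [← ha, _root_.map_smul, smul_eq_mul, mul_ne_zero_iff]
  exact ⟨fun h => h.2, fun h => ⟨a.ne_zero, h⟩⟩

lemma aux_continuousAt_chart (f : PV n →ₗ[ℝ] ℝ) (y : PS n) (hy : f y.rep ≠ 0) :
    ContinuousAt (chart f) y := by
  rw [ContinuousAt, tendsto_nhds]
  intro V hVo hVm
  have hWo : IsOpen {z : PS n | f z.rep ≠ 0 ∧ chart f z ∈ V} := by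
    apply isOpen_coinduced.mpr
    have heq : (Projectivization.mk' ℝ) ⁻¹' {z : PS n | f z.rep ≠ 0 ∧ chart f z ∈ V}
        = Subtype.val ⁻¹' {w : PV n | f w ≠ 0 ∧ (f w)⁻¹ • w ∈ V} := by
      ext v
      simp only [Set.mem_preimage, Set.mem_setOf_eq, Projectivization.mk'_eq_mk]
      rw [aux_rep_mul_ne v.2 f, aux_chart_mk f v.2]
    rw [heq]
    apply IsOpen.preimage continuous_subtype_val
    have : {w : PV n | f w ≠ 0 ∧ (f w)⁻¹ • w ∈ V}
        = {w : PV n | f w ≠ 0} ∩ (fun w => (f w)⁻¹ • w) ⁻¹' V := rfl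
    rw [this]
    apply ContinuousOn.isOpen_inter_preimage _ _ hVo
    · exact ((aux_f_cont f).continuousOn.inv₀ (fun w hw => hw)).smul continuousOn_id
    · exact isOpen_ne_fun (aux_f_cont f) continuous_const
  have hym : y ∈ {z : PS n | f z.rep ≠ 0 ∧ chart f z ∈ V} := ⟨hy, hVm⟩
  exact Filter.mem_of_superset (hWo.mem_nhds hym) (fun z hz => hz.2)

lemma aux_isClosed_singleton (y : PS n) : IsClosed {y} := by
  rw [← isOpen_compl_iff]
  apply isOpen_coinduced.mpr
  rw [Set.preimage_compl, isOpen_compl_iff]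
  have heq : (Projectivization.mk' ℝ) ⁻¹' {y}
      = Subtype.val ⁻¹' ((Submodule.span ℝ {y.rep} : Submodule ℝ (PV n)) : Set (PV n)) := by
    ext v
    simp only [Set.mem_preimage, Set.mem_singleton_iff, Projectivization.mk'_eq_mk, SetLike.mem_coe]
    rw [Submodule.mem_span_singleton]
    constructor
    · intro h
      rw [← h]
      obtain ⟨a, ha⟩ := aux_rep_mk v.2
      exact ⟨(a : ℝ)⁻¹, by rw [← ha, smul_smul, inv_mul_cancel₀ a.ne_zero, one_smul]⟩
    · rintro ⟨a, ha⟩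
      have ha' : a ≠ 0 := by
        rintro rfl; exact v.2 (by rw [← ha, zero_smul])
      have : (v : PV n) ≠ 0 := v.2
      rw [show (Projectivization.mk ℝ (v : PV n) v.2) = Projectivization.mk ℝ (a • y.rep)
        (ha ▸ v.2) from by congr 1; exact ha.symm]
      rw [aux_mk_smul y.rep_nonzero ha', Projectivization.mk_rep]
  rw [heq]
  exact (Submodule.closed_of_finiteDimensional _).preimage continuous_subtype_val

end Aux2
section Aux3
variable {n : ℕ}

lemma aux_pact_inv_cancel (g : SL n) (y : PS n) : pact g⁻¹ (pact g y) = y := by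
  rw [← aux_pact_mul, inv_mul_cancel, aux_pact_one]

lemma aux_mem_of_pact {Ω : Set (PS n)} {γ : SL n} (hγ : InAut γ Ω) {y : PS n} (hy : y ∈ Ω) :
    pact γ y ∈ Ω := by
  rw [← hγ]; exact Set.mem_image_of_mem _ hy

lemma aux_notin_of_pact {Ω : Set (PS n)} {γ : SL n} (hγ : InAut γ Ω) {y : PS n} (hy : y ∉ Ω) :
    pact γ y ∉ Ω := by
  intro h
  rw [← hγ] at h
  obtain ⟨w, hw, hww⟩ := h
  apply hy
  have : y = w := by
    have := congrArg (pact γ⁻¹) hww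
    rw [aux_pact_inv_cancel, aux_pact_inv_cancel] at this
    exact this.symm
  rwa [this]

lemma aux_closure_of_pact {Ω : Set (PS n)} {γ : SL n} (hγ : InAut γ Ω) {y : PS n}
    (hy : y ∈ closure Ω) : pact γ y ∈ closure Ω := by
  have h1 : pact γ y ∈ pact γ '' closure Ω := Set.mem_image_of_mem _ hy
  have h2 : pact γ '' closure Ω ⊆ closure (pact γ '' Ω) :=
    image_closure_subset_closure_image (aux_continuous_pact γ)
  rw [hγ] at h2
  exact h2 h1

lemma aux_frontier_of_pact {Ω : Set (PS n)} (hΩo : IsOpen Ω) {γ : SL n} (hγ : InAut γ Ω)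
    {y : PS n} (hy : y ∈ frontier Ω) : pact γ y ∈ frontier Ω := by
  rw [hΩo.frontier_eq] at hy ⊢
  exact ⟨aux_closure_of_pact hγ hy.1, aux_notin_of_pact hγ hy.2⟩

lemma aux_inaut_pow {Ω : Set (PS n)} {γ : SL n} (hγ : InAut γ Ω) (m : ℕ) :
    ∀ y ∈ closure Ω, pact (γ ^ m) y ∈ closure Ω := by
  induction m with
  | zero => intro y hy; rwa [pow_zero, aux_pact_one]
  | succ k ih =>
    intro y hy
    rw [pow_succ, aux_pact_mul]
    exact ih _ (aux_closure_of_pact hγ hy)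

lemma aux_frontier_pow {Ω : Set (PS n)} (hΩo : IsOpen Ω) {γ : SL n} (hγ : InAut γ Ω) (m : ℕ) :
    ∀ y ∈ frontier Ω, pact (γ ^ m) y ∈ frontier Ω := by
  induction m with
  | zero => intro y hy; rwa [pow_zero, aux_pact_one]
  | succ k ih =>
    intro y hy
    rw [pow_succ, aux_pact_mul]
    exact ih _ (aux_frontier_of_pact hΩo hγ hy)

/-- A continuous nonvanishing function on an interval has constant sign. -/
lemma aux_same_sign {g : ℝ → ℝ} (hg : Continuous g) {u v : ℝ} (hne : ∀ r ∈ Set.Icc u v, g r ≠ 0)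
    {s t : ℝ} (hs : s ∈ Set.Icc u v) (ht : t ∈ Set.Icc u v) : 0 < g s * g t := by
  rcases lt_trichotomy (g s * g t) 0 with h | h | h
  · exfalso
    have h0 : (0:ℝ) ∈ Set.uIcc (g s) (g t) := by
      rcases mul_neg_iff.mp h with ⟨h1, h2⟩ | ⟨h1, h2⟩
      · exact Set.mem_uIcc.mpr (Or.inr ⟨h2.le, h1.le⟩)
      · exact Set.mem_uIcc.mpr (Or.inl ⟨h1.le, h2.le⟩)
    obtain ⟨r, hr, hr0⟩ := intermediate_value_uIcc (hg.continuousOn (s := Set.uIcc s t)) h0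
    have hsub : Set.uIcc s t ⊆ Set.Icc u v := Set.uIcc_subset_Icc hs ht
    exact hne r (hsub hr) hr0
  · exfalso
    rcases mul_eq_zero.mp h with h1 | h1
    · exact hne s hs h1
    · exact hne t ht h1
  · exact h

end Aux3
section Aux4

lemma aux_affine_id0 (α β a b p q : ℝ) (hA : α + a*β ≠ 0) (hB : α + b*β ≠ 0)
    (h0 : α ≠ 0) (hab : b - a ≠ 0) :
    α⁻¹ * p = (α + a*β)⁻¹*(p + a*q)
      + ((-a*(α + b*β))/((b-a)*α)) * ((α + b*β)⁻¹*(p+b*q) - (α+a*β)⁻¹*(p+a*q)) := by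
  have hA' : α + β*a ≠ 0 := by rwa [mul_comm]
  have hB' : α + β*b ≠ 0 := by rwa [mul_comm]
  have hA'' : a*β + α ≠ 0 := by rwa [add_comm]
  have hB'' : b*β + α ≠ 0 := by rwa [add_comm]
  field_simp
  ring

lemma aux_affine_id1 (α β a b p q : ℝ) (hA : α + a*β ≠ 0) (hB : α + b*β ≠ 0)
    (h1 : α + β ≠ 0) (hab : b - a ≠ 0) :
    (α+β)⁻¹ * (p + q) = (α + a*β)⁻¹*(p + a*q)
      + (((1-a)*(α + b*β))/((b-a)*(α+β))) * ((α + b*β)⁻¹*(p+b*q) - (α+a*β)⁻¹*(p+a*q)) := by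
  have hA' : α + β*a ≠ 0 := by rwa [mul_comm]
  have hB' : α + β*b ≠ 0 := by rwa [mul_comm]
  have hA'' : a*β + α ≠ 0 := by rwa [add_comm]
  have hB'' : b*β + α ≠ 0 := by rwa [add_comm]
  field_simp
  ring

lemma aux_cross_id (α β a b : ℝ) (ha : a < 0) (hb : 1 < b) (h0 : α ≠ 0)
    (h1 : α + β ≠ 0) (hA : α + a*β ≠ 0) (hB : α + b*β ≠ 0) :
    (((1 - a)*(α + b*β))/((b-a)*(α+β))) * (1 - (-a*(α + b*β))/((b-a)*α))
      = (((1-a)*b)/((b-1)*(-a)))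
        * (((-a*(α + b*β))/((b-a)*α)) * (1 - ((1 - a)*(α + b*β))/((b-a)*(α+β)))) := by
  have hab : b - a ≠ 0 := by nlinarith
  have hb1 : b - 1 ≠ 0 := by nlinarith
  have ha0 : a ≠ 0 := ne_of_lt ha
  field_simp
  ring

/-- Position of the transformed ratio inside `(0,1)`. -/
lemma aux_sigma_mem (α β a b t : ℝ) (hsbt : 0 < (α + b*β)*(α + t*β))
    (hsat : 0 < (α + a*β)*(α + t*β)) (hat : a < t) (htb : t < b) :
    ((t - a)*(α + b*β))/((b - a)*(α + t*β)) ∈ Set.Ioo (0:ℝ) 1 := by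
  have hT : α + t*β ≠ 0 := by
    intro h; rw [h, mul_zero] at hsbt; exact lt_irrefl 0 hsbt
  have hab : b - a ≠ 0 := ne_of_gt (by linarith)
  constructor
  · rw [mul_div_mul_comm]
    apply mul_pos (div_pos (by linarith) (by linarith))
    rcases mul_pos_iff.mp hsbt with ⟨p1, p2⟩ | ⟨p1, p2⟩
    · exact div_pos p1 p2
    · exact div_pos_of_neg_of_neg p1 p2
  · have key : 1 - ((t - a)*(α + b*β))/((b - a)*(α + t*β))
        = ((b - t)*(α + a*β))/((b-a)*(α+t*β)) := by
      field_simp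
      ring
    have hpos : 0 < ((b - t)*(α + a*β))/((b-a)*(α+t*β)) := by
      rw [mul_div_mul_comm]
      apply mul_pos (div_pos (by linarith) (by linarith))
      rcases mul_pos_iff.mp hsat with ⟨p1, p2⟩ | ⟨p1, p2⟩
      · exact div_pos p1 p2
      · exact div_pos_of_neg_of_neg p1 p2
    linarith [key ▸ hpos]

lemma aux_rho_mem (α β a b : ℝ) (hsb : 0 < (α + b*β)*α) (hsa : 0 < (α + a*β)*α)
    (ha : a < 0) (hb : 0 < b) :
    (-a*(α + b*β))/((b-a)*α) ∈ Set.Ioo (0:ℝ) 1 := by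
  have := aux_sigma_mem α β a b 0 (by simpa using hsb) (by simpa using hsa) ha hb
  simpa using this

lemma aux_tau_mem (α β a b : ℝ) (hsb : 0 < (α + b*β)*(α + β)) (hsa : 0 < (α + a*β)*(α + β))
    (ha : a < 1) (hb : 1 < b) :
    ((1-a)*(α + b*β))/((b-a)*(α+β)) ∈ Set.Ioo (0:ℝ) 1 := by
  have := aux_sigma_mem α β a b 1 (by simpa using hsb) (by simpa using hsa) ha hb
  simpa using this

end Aux4
section Aux5
variable {n : ℕ}

lemma aux_mk_eq_of_eq {v w : PV n} (hv : v ≠ 0) (hw : w ≠ 0) (h : v = w) :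
    Projectivization.mk ℝ v hv = Projectivization.mk ℝ w hw := by subst h; rfl

lemma aux_mk_inj (f : PV n →ₗ[ℝ] ℝ) {v w : PV n} (hv : v ≠ 0) (hw : w ≠ 0)
    (hfv : f v = 1) (hfw : f w = 1)
    (h : Projectivization.mk ℝ v hv = Projectivization.mk ℝ w hw) : v = w := by
  obtain ⟨a, ha⟩ := (Projectivization.mk_eq_mk_iff ℝ v w hv hw).mp h
  rw [Units.smul_def] at ha
  have h2 : f ((a : ℝ) • w) = f v := by rw [ha]
  rw [_root_.map_smul, smul_eq_mul, hfw, hfv, mul_one] at h2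
  rw [← ha, h2, one_smul]

end Aux5

open scoped Topology

/-- Any accumulation point of an orbit `(γ^m · x)` which lies in `∂Ω` and is an extremal
point of `Ω` is a fixed point of `γ`. -/
theorem extremal_accumulation_point_is_fixed (n : ℕ) (f : PV n →ₗ[ℝ] ℝ)
    (Ω : Set (PS n)) (hΩ : IsPCOWith f Ω) (γ : SL n) (hγ : InAut γ Ω)
    (x : PS n) (hx : x ∈ Ω) (p : PS n)
    (hacc : MapClusterPt p atTop (fun m : ℕ => pact (γ ^ m) x))
    (hfr : p ∈ frontier Ω) (hext : IsExtremalPointW f Ω p) :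
    pact γ p = p := by
  classical
  by_cases hfix : pact γ x = x
  · -- degenerate case: the orbit is constant, so `p = x ∈ Ω`, contradicting `p ∈ ∂Ω`.
    exfalso
    have hconst : ∀ m : ℕ, pact (γ ^ m) x = x := by
      intro m
      induction m with
      | zero => rw [pow_zero, aux_pact_one]
      | succ k ih => rw [pow_succ, aux_pact_mul, hfix, ih]
    have hacc' : MapClusterPt p atTop (fun _ : ℕ => x) := by
      simpa only [hconst] using hacc
    have h2 : p ∈ closure ({x} : Set (PS n)) := by
      rw [mem_closure_iff_clusterPt, Filter.principal_singleton]
      rwa [MapClusterPt, Filter.map_const] at hacc'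
    rw [(aux_isClosed_singleton x).closure_eq, Set.mem_singleton_iff] at h2
    rw [hΩ.isOpen.frontier_eq] at hfr
    exact hfr.2 (h2 ▸ hx)
  -- main case
  obtain ⟨U, hUle, hU⟩ := mapClusterPt_iff_ultrafilter.mp hacc
  have hxc : x ∈ closure Ω := subset_closure hx
  have hfx : f x.rep ≠ 0 := hΩ.avoids x hxc
  have hγx : pact γ x ∈ Ω := aux_mem_of_pact hγ hx
  have hfγx : f (pact γ x).rep ≠ 0 := hΩ.avoids _ (subset_closure hγx)
  have hpc : p ∈ closure Ω := frontier_subset_closure hfr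
  have hfp : f p.rep ≠ 0 := hΩ.avoids p hpc
  have hγpc : pact γ p ∈ closure Ω := aux_closure_of_pact hγ hpc
  have hfγp : f (pact γ p).rep ≠ 0 := hΩ.avoids _ hγpc
  set x₀ : PV n := chart f x with hx₀def
  set x₁ : PV n := chart f (pact γ x) with hx₁def
  have hfx₀ : f x₀ = 1 := aux_f_chart f hfx
  have hfx₁ : f x₁ = 1 := aux_f_chart f hfγx
  set d : PV n := x₁ - x₀ with hddef
  have hfd : f d = 0 := by rw [hddef, map_sub, hfx₀, hfx₁, sub_self]
  have hd : d ≠ 0 := by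
    intro h
    apply hfix
    have hee : x₁ = x₀ := by rwa [hddef, sub_eq_zero] at h
    calc pact γ x = Projectivization.mk ℝ x₁ (aux_chart_ne_zero f hfγx) :=
          (aux_mk_chart f hfγx _).symm
      _ = Projectivization.mk ℝ x₀ (aux_chart_ne_zero f hfx) :=
          aux_mk_eq_of_eq _ _ hee
      _ = x := aux_mk_chart f hfx _
  set L : ℝ → PV n := fun t => x₀ + t • d with hLdef
  have hfL : ∀ t, f (L t) = 1 := by
    intro t
    rw [hLdef]
    simp only [map_add, _root_.map_smul, smul_eq_mul, hfx₀, hfd, mul_zero, add_zero]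
  have hL0 : ∀ t, L t ≠ 0 := by
    intro t h
    have h1 := hfL t
    rw [h, map_zero] at h1
    norm_num at h1
  set g : ℝ → PS n := fun t => Projectivization.mk ℝ (L t) (hL0 t) with hgdef
  have hgcont : Continuous g := by
    have hge : g = (Projectivization.mk' ℝ) ∘ (fun t => (⟨L t, hL0 t⟩ : {v : PV n // v ≠ 0})) := by
      funext t
      rw [hgdef]
      simp [Projectivization.mk'_eq_mk]
    rw [hge]
    refine aux_continuous_mk'.comp (Continuous.subtype_mk ?_ _)
    exact continuous_const.add (continuous_id.smul continuous_const)
  have hg0 : g 0 = x := by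
    rw [hgdef]
    exact (aux_mk_eq_of_eq _ (aux_chart_ne_zero f hfx) (by rw [hLdef]; simp [hx₀def])).trans
      (aux_mk_chart f hfx _)
  have hg1 : g 1 = pact γ x := by
    rw [hgdef]
    exact (aux_mk_eq_of_eq _ (aux_chart_ne_zero f hfγx) (by rw [hLdef, hddef]; simp [hx₁def])).trans
      (aux_mk_chart f hfγx _)
  -- the interval of the segment
  set I : Set ℝ := {t : ℝ | g t ∈ Ω} with hIdef
  have hI0 : (0:ℝ) ∈ I := by rw [hIdef]; simp only [Set.mem_setOf_eq, hg0]; exact hx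
  have hI1 : (1:ℝ) ∈ I := by rw [hIdef]; simp only [Set.mem_setOf_eq, hg1]; exact hγx
  have hchartg : ∀ t, chart f (g t) = L t := by
    intro t
    rw [hgdef, aux_chart_mk f (hL0 t), hfL t, inv_one, one_smul]
  have hmemS : ∀ t : ℝ, L t ∈ chart f '' Ω ↔ g t ∈ Ω := by
    intro t
    constructor
    · rintro ⟨y, hy, heq⟩
      have hyrep : f y.rep ≠ 0 := hΩ.avoids _ (subset_closure hy)
      have hgy : g t = y := by
        rw [hgdef]
        exact (aux_mk_eq_of_eq _ (aux_chart_ne_zero f hyrep) heq.symm).trans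
          (aux_mk_chart f hyrep _)
      rwa [hgy]
    · intro h
      exact ⟨g t, h, hchartg t⟩
  have hIconv : Convex ℝ I := by
    intro s hs t ht aa bb haa hbb hab1
    have h1 : aa • L s + bb • L t = L (aa * s + bb * t) := by
      rw [hLdef]
      have h2 : aa • (x₀ + s • d) + bb • (x₀ + t • d)
          = (aa + bb) • x₀ + (aa * s + bb * t) • d := by
        funext i
        simp only [Pi.add_apply, Pi.smul_apply, smul_eq_mul]
        ring
      rw [h2, hab1, one_smul]
    have h2 : aa • L s + bb • L t ∈ chart f '' Ω :=
      hΩ.convex ((hmemS s).mpr hs) ((hmemS t).mpr ht) haa hbb hab1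
    rw [h1] at h2
    exact (hmemS _).mp h2
  have hIopen : IsOpen I := hΩ.isOpen.preimage hgcont
  obtain ⟨R, hR⟩ := hΩ.bounded.subset_closedBall 0
  have hdpos : (0:ℝ) < ‖d‖ := norm_pos_iff.mpr hd
  have hIbd : ∀ t ∈ I, |t| ≤ (R + ‖x₀‖) / ‖d‖ := by
    intro t ht
    have h1 : L t ∈ chart f '' Ω := (hmemS t).mpr ht
    have h2 : ‖L t‖ ≤ R := by
      have h3 := hR h1
      rwa [Metric.mem_closedBall, dist_zero_right] at h3
    have h3 : |t| * ‖d‖ = ‖L t - x₀‖ := by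
      rw [hLdef]
      simp only [add_sub_cancel_left]
      rw [norm_smul, Real.norm_eq_abs]
    have h4 : ‖L t - x₀‖ ≤ R + ‖x₀‖ := le_trans (norm_sub_le _ _) (by linarith)
    rw [le_div_iff₀ hdpos]
    linarith [h3 ▸ h4]
  have hBddA : BddAbove I := ⟨(R + ‖x₀‖) / ‖d‖, fun t ht => le_trans (le_abs_self t) (hIbd t ht)⟩
  have hBddB : BddBelow I := ⟨-((R + ‖x₀‖) / ‖d‖), fun t ht => neg_le_of_abs_le (hIbd t ht)⟩
  set a' : ℝ := sInf I with ha'def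
  set b' : ℝ := sSup I with hb'def
  have hIne : I.Nonempty := ⟨0, hI0⟩
  have ha'le : a' ≤ 0 := csInf_le hBddB hI0
  have hb'ge : (1:ℝ) ≤ b' := le_csSup hBddA hI1
  have ha'nm : a' ∉ I := by
    intro h
    obtain ⟨ε, hε, hball⟩ := Metric.isOpen_iff.mp hIopen a' h
    have hmem : a' - ε/2 ∈ I := by
      apply hball
      rw [Metric.mem_ball, Real.dist_eq, abs_of_nonpos (by linarith)]
      linarith
    have h5 := csInf_le hBddB hmem
    linarith
  have hb'nm : b' ∉ I := by
    intro h
    obtain ⟨ε, hε, hball⟩ := Metric.isOpen_iff.mp hIopen b' h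
    have hmem : b' + ε/2 ∈ I := by
      apply hball
      rw [Metric.mem_ball, Real.dist_eq, abs_of_nonneg (by linarith)]
      linarith
    have h5 := le_csSup hBddA hmem
    linarith
  have ha'0 : a' < 0 := lt_of_le_of_ne ha'le (fun h => ha'nm (h ▸ hI0))
  have hb'1 : (1:ℝ) < b' := lt_of_le_of_ne hb'ge (fun h => hb'nm (h ▸ hI1))
  have ha'b' : a' < b' := by linarith
  have hIoo : Set.Ioo a' b' ⊆ I := by
    intro t ht
    obtain ⟨s1, hs1, hs1t⟩ := exists_lt_of_csInf_lt hIne ht.1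
    obtain ⟨s2, hs2, hts2⟩ := exists_lt_of_lt_csSup hIne ht.2
    exact hIconv.ordConnected.out hs1 hs2 ⟨le_of_lt hs1t, le_of_lt hts2⟩
  have hIccCl : ∀ t ∈ Set.Icc a' b', g t ∈ closure Ω := by
    intro t ht
    have hIccEq : Set.Icc a' b' = closure (Set.Ioo a' b') := (closure_Ioo (ne_of_lt ha'b')).symm
    rw [hIccEq] at ht
    have h1 : g t ∈ g '' closure (Set.Ioo a' b') := Set.mem_image_of_mem _ ht
    have h2 : g '' closure (Set.Ioo a' b') ⊆ closure (g '' Set.Ioo a' b') :=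
      image_closure_subset_closure_image hgcont
    have h3 : closure (g '' Set.Ioo a' b') ⊆ closure Ω :=
      closure_mono (Set.image_subset_iff.mpr (fun s hs => hIoo hs))
    exact h3 (h2 h1)
  have ha'mem : a' ∈ Set.Icc a' b' := ⟨le_refl _, le_of_lt ha'b'⟩
  have hb'mem : b' ∈ Set.Icc a' b' := ⟨le_of_lt ha'b', le_refl _⟩
  have h0mem : (0:ℝ) ∈ Set.Icc a' b' := ⟨ha'le, by linarith⟩
  have h1mem : (1:ℝ) ∈ Set.Icc a' b' := ⟨by linarith, hb'ge⟩
  have hAfr : g a' ∈ frontier Ω := by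
    rw [hΩ.isOpen.frontier_eq]
    exact ⟨hIccCl a' ha'mem, ha'nm⟩
  have hBfr : g b' ∈ frontier Ω := by
    rw [hΩ.isOpen.frontier_eq]
    exact ⟨hIccCl b' hb'mem, hb'nm⟩
  -- per-iterate data
  set P : ℕ → PV n := fun m => ((γ^m : SL n) : Matrix (Fin (n+1)) (Fin (n+1)) ℝ).mulVec x₀
    with hPdef
  set D : ℕ → PV n := fun m => ((γ^m : SL n) : Matrix (Fin (n+1)) (Fin (n+1)) ℝ).mulVec d
    with hDdef
  set W : ℕ → ℝ → PV n :=
    fun m t => ((γ^m : SL n) : Matrix (Fin (n+1)) (Fin (n+1)) ℝ).mulVec (L t) with hWdef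
  have hWadd : ∀ m t, W m t = P m + t • D m := by
    intro m t
    rw [hWdef, hPdef, hDdef, hLdef]
    simp only [Matrix.mulVec_add, Matrix.mulVec_smul]
  set al : ℕ → ℝ := fun m => f (P m) with haldef
  set be : ℕ → ℝ := fun m => f (D m) with hbedef
  have hfW : ∀ m t, f (W m t) = al m + t * be m := by
    intro m t
    rw [hWadd, map_add, _root_.map_smul, smul_eq_mul, haldef, hbedef]
  have hWne : ∀ m t, W m t ≠ 0 := fun m t => aux_mulVec_ne_zero _ (hL0 t)
  have hpactg : ∀ m t, pact (γ^m) (g t) = Projectivization.mk ℝ (W m t) (hWne m t) := by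
    intro m t
    rw [hgdef]
    exact aux_pact_mk _ (hL0 t)
  have halbe : ∀ m, ∀ t ∈ Set.Icc a' b', al m + t * be m ≠ 0 := by
    intro m t ht
    have h1 : pact (γ^m) (g t) ∈ closure Ω := aux_inaut_pow hγ m _ (hIccCl t ht)
    have h2 : f ((pact (γ^m) (g t)).rep) ≠ 0 := hΩ.avoids _ h1
    rw [hpactg m t, aux_rep_mul_ne (hWne m t) f] at h2
    rwa [hfW m t] at h2
  have hal0 : ∀ m, al m ≠ 0 := by
    intro m
    have h5 := halbe m 0 h0mem
    simpa using h5
  have hal1 : ∀ m, al m + be m ≠ 0 := by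
    intro m
    have h5 := halbe m 1 h1mem
    simpa using h5
  have hala : ∀ m, al m + a' * be m ≠ 0 := fun m => halbe m a' ha'mem
  have halb : ∀ m, al m + b' * be m ≠ 0 := fun m => halbe m b' hb'mem
  have hsign : ∀ m, ∀ s ∈ Set.Icc a' b', ∀ t ∈ Set.Icc a' b',
      0 < (al m + s * be m) * (al m + t * be m) := by
    intro m s hs t ht
    have hcont : Continuous (fun r : ℝ => al m + r * be m) :=
      continuous_const.add (continuous_id.mul continuous_const)
    exact aux_same_sign hcont (halbe m) hs ht
  -- the chart images of the four points
  set v : ℕ → ℝ → PV n := fun m t => chart f (pact (γ^m) (g t)) with hvdef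
  have hveq : ∀ m t, v m t = (al m + t * be m)⁻¹ • (P m + t • D m) := by
    intro m t
    rw [hvdef]
    simp only []
    rw [hpactg m t, aux_chart_mk f (hWne m t), hfW m t, hWadd m t]
  -- ratio functions
  set rr : ℕ → ℝ := fun m => (-a' * (al m + b' * be m)) / ((b' - a') * al m) with hrrdef
  set tt : ℕ → ℝ := fun m => ((1 - a') * (al m + b' * be m)) / ((b' - a') * (al m + be m))
    with httdef
  have hab0 : b' - a' ≠ 0 := ne_of_gt (by linarith)
  have hVid0 : ∀ m, v m 0 = v m a' + rr m • (v m b' - v m a') := by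
    intro m
    funext i
    have h1 := aux_affine_id0 (al m) (be m) a' b' (P m i) (D m i) (hala m) (halb m)
      (hal0 m) hab0
    simp only [hveq, hrrdef, Pi.add_apply, Pi.smul_apply, Pi.sub_apply, smul_eq_mul]
    simpa using h1
  have hVid1 : ∀ m, v m 1 = v m a' + tt m • (v m b' - v m a') := by
    intro m
    funext i
    have h1 := aux_affine_id1 (al m) (be m) a' b' (P m i) (D m i) (hala m) (halb m)
      (hal1 m) hab0
    simp only [hveq, httdef, Pi.add_apply, Pi.smul_apply, Pi.sub_apply, smul_eq_mul]
    simpa using h1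
  set C : ℝ := ((1 - a') * b') / ((b' - 1) * (-a')) with hCdef
  have hCpos : 0 < C := by
    rw [hCdef]
    exact div_pos (mul_pos (by linarith) (by linarith)) (mul_pos (by linarith) (by linarith))
  have hcr : ∀ m, tt m * (1 - rr m) = C * (rr m * (1 - tt m)) := by
    intro m
    rw [hrrdef, httdef, hCdef]
    exact aux_cross_id (al m) (be m) a' b' ha'0 hb'1 (hal0 m) (hal1 m) (hala m) (halb m)
  have hrrmem : ∀ m, rr m ∈ Set.Ioo (0:ℝ) 1 := by
    intro m
    rw [hrrdef]
    apply aux_rho_mem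
    · have h5 := hsign m b' hb'mem 0 h0mem; simpa using h5
    · have h5 := hsign m a' ha'mem 0 h0mem; simpa using h5
    · exact ha'0
    · linarith
  have httmem : ∀ m, tt m ∈ Set.Ioo (0:ℝ) 1 := by
    intro m
    rw [httdef]
    apply aux_tau_mem
    · have h5 := hsign m b' hb'mem 1 h1mem; simpa using h5
    · have h5 := hsign m a' ha'mem 1 h1mem; simpa using h5
    · linarith
    · exact hb'1
  -- limits along the ultrafilter
  have hKcomp : IsCompact (closure (chart f '' Ω)) :=
    Metric.isCompact_of_isClosed_isBounded isClosed_closure hΩ.bounded.closure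
  have hchart_cl : ∀ y ∈ closure Ω, chart f y ∈ closure (chart f '' Ω) := fun y hy =>
    ((aux_continuousAt_chart f y (hΩ.avoids y hy)).continuousWithinAt).mem_closure_image hy
  have hvmemA : ∀ m, v m a' ∈ closure (chart f '' Ω) := by
    intro m
    rw [hvdef]
    exact hchart_cl _ (aux_inaut_pow hγ m _ (hIccCl a' ha'mem))
  have hvmemB : ∀ m, v m b' ∈ closure (chart f '' Ω) := by
    intro m
    rw [hvdef]
    exact hchart_cl _ (aux_inaut_pow hγ m _ (hIccCl b' hb'mem))
  obtain ⟨ah, hahK, hahle⟩ := hKcomp.ultrafilter_le_nhds (U.map (fun m => v m a'))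
    (le_principal_iff.mpr (Filter.mem_map.mpr (Filter.univ_mem' hvmemA)))
  obtain ⟨bh, hbhK, hbhle⟩ := hKcomp.ultrafilter_le_nhds (U.map (fun m => v m b'))
    (le_principal_iff.mpr (Filter.mem_map.mpr (Filter.univ_mem' hvmemB)))
  have hahT : Tendsto (fun m => v m a') (U : Filter ℕ) (𝓝 ah) := hahle
  have hbhT : Tendsto (fun m => v m b') (U : Filter ℕ) (𝓝 bh) := hbhle
  obtain ⟨rh, hrhI, hrhle⟩ := (isCompact_Icc (a := (0:ℝ)) (b := 1)).ultrafilter_le_nhds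
    (U.map rr) (le_principal_iff.mpr (Filter.mem_map.mpr (Filter.univ_mem'
      (fun m => Set.mem_Icc.mpr ⟨le_of_lt (hrrmem m).1, le_of_lt (hrrmem m).2⟩))))
  obtain ⟨th, hthI, hthle⟩ := (isCompact_Icc (a := (0:ℝ)) (b := 1)).ultrafilter_le_nhds
    (U.map tt) (le_principal_iff.mpr (Filter.mem_map.mpr (Filter.univ_mem'
      (fun m => Set.mem_Icc.mpr ⟨le_of_lt (httmem m).1, le_of_lt (httmem m).2⟩))))
  have hrhT : Tendsto rr (U : Filter ℕ) (𝓝 rh) := hrhle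
  have hthT : Tendsto tt (U : Filter ℕ) (𝓝 th) := hthle
  -- limits of the orbit charts
  have hXlim : Tendsto (fun m => v m 0) (U : Filter ℕ) (𝓝 (chart f p)) := by
    have he : (fun m => v m 0) = (chart f) ∘ (fun m : ℕ => pact (γ ^ m) x) := by
      funext m
      rw [hvdef]
      simp only [Function.comp_apply, hg0]
    rw [he]
    exact (aux_continuousAt_chart f p hfp).tendsto.comp hU
  have hYlim : Tendsto (fun m => v m 1) (U : Filter ℕ) (𝓝 (chart f (pact γ p))) := by
    have he : (fun m => v m 1) = ((chart f) ∘ (pact γ)) ∘ (fun m : ℕ => pact (γ ^ m) x) := by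
      funext m
      rw [hvdef]
      simp only [Function.comp_apply, hg1]
      rw [← aux_pact_mul, ← pow_succ, pow_succ', aux_pact_mul]
    rw [he]
    exact ((aux_continuousAt_chart f _ hfγp).tendsto.comp
      (aux_continuous_pact γ).continuousAt.tendsto).comp hU
  -- limit identities
  have hlim0 : Tendsto (fun m => v m a' + rr m • (v m b' - v m a')) (U : Filter ℕ)
      (𝓝 (ah + rh • (bh - ah))) := hahT.add (hrhT.smul (hbhT.sub hahT))
  have hlim1 : Tendsto (fun m => v m a' + tt m • (v m b' - v m a')) (U : Filter ℕ)
      (𝓝 (ah + th • (bh - ah))) := hahT.add (hthT.smul (hbhT.sub hahT))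
  have hpeq : chart f p = ah + rh • (bh - ah) := by
    refine tendsto_nhds_unique ?_ hlim0
    have he : (fun m => v m 0) = fun m => v m a' + rr m • (v m b' - v m a') := funext hVid0
    rwa [← he]
  have hqeq : chart f (pact γ p) = ah + th • (bh - ah) := by
    refine tendsto_nhds_unique ?_ hlim1
    have he : (fun m => v m 1) = fun m => v m a' + tt m • (v m b' - v m a') := funext hVid1
    rwa [← he]
  have hcrlim : th * (1 - rh) = C * (rh * (1 - th)) := by
    refine tendsto_nhds_unique (f := fun m => tt m * (1 - rr m)) (l := (U : Filter ℕ)) ?_ ?_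
    · exact hthT.mul (tendsto_const_nhds.sub hrhT)
    · have he : (fun m => tt m * (1 - rr m)) = fun m => C * (rr m * (1 - tt m)) := funext hcr
      rw [he]
      exact tendsto_const_nhds.mul (hrhT.mul (tendsto_const_nhds.sub hthT))
  -- f-values of the limits
  have hfah : f ah = 1 := by
    refine tendsto_nhds_unique ((aux_f_cont f).continuousAt.tendsto.comp hahT) ?_
    have he : (f ∘ fun m => v m a') = fun _ : ℕ => (1:ℝ) := by
      funext m
      simp only [Function.comp_apply, hvdef]
      exact aux_f_chart f (hΩ.avoids _ (aux_inaut_pow hγ m _ (hIccCl a' ha'mem)))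
    rw [he]
    exact tendsto_const_nhds
  have hfbh : f bh = 1 := by
    refine tendsto_nhds_unique ((aux_f_cont f).continuousAt.tendsto.comp hbhT) ?_
    have he : (f ∘ fun m => v m b') = fun _ : ℕ => (1:ℝ) := by
      funext m
      simp only [Function.comp_apply, hvdef]
      exact aux_f_chart f (hΩ.avoids _ (aux_inaut_pow hγ m _ (hIccCl b' hb'mem)))
    rw [he]
    exact tendsto_const_nhds
  have hahne : ah ≠ 0 := by
    intro h
    rw [h, map_zero] at hfah
    norm_num at hfah
  have hbhne : bh ≠ 0 := by
    intro h
    rw [h, map_zero] at hfbh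
    norm_num at hfbh
  -- the limit points are in the frontier
  have hfrA : Projectivization.mk ℝ ah hahne ∈ frontier Ω := by
    have hrep : ∀ m, f ((pact (γ^m) (g a')).rep) ≠ 0 :=
      fun m => hΩ.avoids _ (aux_inaut_pow hγ m _ (hIccCl a' ha'mem))
    have hne : ∀ m, v m a' ≠ 0 := by
      intro m
      rw [hvdef]
      exact aux_chart_ne_zero f (hrep m)
    have hsub : Tendsto (fun m => (⟨v m a', hne m⟩ : {w : PV n // w ≠ 0})) (U : Filter ℕ)
        (𝓝 ⟨ah, hahne⟩) := tendsto_subtype_rng.mpr hahT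
    have hmk : Tendsto (fun m => Projectivization.mk' ℝ (⟨v m a', hne m⟩ : {w : PV n // w ≠ 0}))
        (U : Filter ℕ) (𝓝 (Projectivization.mk' ℝ ⟨ah, hahne⟩)) :=
      aux_continuous_mk'.continuousAt.tendsto.comp hsub
    have hmem : ∀ m, Projectivization.mk' ℝ (⟨v m a', hne m⟩ : {w : PV n // w ≠ 0})
        ∈ frontier Ω := by
      intro m
      have h6 : Projectivization.mk' ℝ (⟨v m a', hne m⟩ : {w : PV n // w ≠ 0})
          = pact (γ^m) (g a') := aux_mk_chart f (hrep m) _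
      rw [h6]
      exact aux_frontier_pow hΩ.isOpen hγ m _ hAfr
    have h7 := isClosed_frontier.mem_of_tendsto hmk (Filter.Eventually.of_forall hmem)
    rwa [Projectivization.mk'_eq_mk] at h7
  have hfrB : Projectivization.mk ℝ bh hbhne ∈ frontier Ω := by
    have hrep : ∀ m, f ((pact (γ^m) (g b')).rep) ≠ 0 :=
      fun m => hΩ.avoids _ (aux_inaut_pow hγ m _ (hIccCl b' hb'mem))
    have hne : ∀ m, v m b' ≠ 0 := by
      intro m
      rw [hvdef]
      exact aux_chart_ne_zero f (hrep m)
    have hsub : Tendsto (fun m => (⟨v m b', hne m⟩ : {w : PV n // w ≠ 0})) (U : Filter ℕ)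
        (𝓝 ⟨bh, hbhne⟩) := tendsto_subtype_rng.mpr hbhT
    have hmk : Tendsto (fun m => Projectivization.mk' ℝ (⟨v m b', hne m⟩ : {w : PV n // w ≠ 0}))
        (U : Filter ℕ) (𝓝 (Projectivization.mk' ℝ ⟨bh, hbhne⟩)) :=
      aux_continuous_mk'.continuousAt.tendsto.comp hsub
    have hmem : ∀ m, Projectivization.mk' ℝ (⟨v m b', hne m⟩ : {w : PV n // w ≠ 0})
        ∈ frontier Ω := by
      intro m
      have h6 : Projectivization.mk' ℝ (⟨v m b', hne m⟩ : {w : PV n // w ≠ 0})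
          = pact (γ^m) (g b') := aux_mk_chart f (hrep m) _
      rw [h6]
      exact aux_frontier_pow hΩ.isOpen hγ m _ hBfr
    have h7 := isClosed_frontier.mem_of_tendsto hmk (Filter.Eventually.of_forall hmem)
    rwa [Projectivization.mk'_eq_mk] at h7
  -- endgame
  suffices hchart : chart f (pact γ p) = chart f p by
    calc pact γ p = Projectivization.mk ℝ (chart f (pact γ p)) (aux_chart_ne_zero f hfγp) :=
          (aux_mk_chart f hfγp _).symm
      _ = Projectivization.mk ℝ (chart f p) (aux_chart_ne_zero f hfp) :=
          aux_mk_eq_of_eq _ _ hchart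
      _ = p := aux_mk_chart f hfp _
  by_cases hab : ah = bh
  · rw [hpeq, hqeq, hab, sub_self, smul_zero, smul_zero]
  by_cases hrt : rh = th
  · rw [hpeq, hqeq, hrt]
  exfalso
  -- the cross-ratio identity forces `rh ∈ (0,1)`
  have hrh0 : rh ≠ 0 := by
    intro h
    rw [h, sub_zero, mul_one, zero_mul, mul_zero] at hcrlim
    exact hrt (h.trans hcrlim.symm)
  have hrh1 : rh ≠ 1 := by
    intro h
    rw [h, sub_self, mul_zero, one_mul] at hcrlim
    rcases mul_eq_zero.mp hcrlim.symm with h9 | h9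
    · exact absurd h9 (ne_of_gt hCpos)
    · exact hrt (by rw [h]; linarith)
  have hrhIoo : rh ∈ Set.Ioo (0:ℝ) 1 :=
    ⟨lt_of_le_of_ne hrhI.1 (Ne.symm hrh0), lt_of_le_of_ne hrhI.2 hrh1⟩
  -- chart f p lies in the open segment between ah and bh
  have hseg : chart f p ∈ openSegment ℝ ah bh := by
    refine ⟨1 - rh, rh, by linarith [hrhIoo.2], hrhIoo.1, by ring, ?_⟩
    rw [hpeq, sub_smul, one_smul, smul_sub]
    abel
  -- extremality gives ah = bh, contradiction
  have hchA : chart f (Projectivization.mk ℝ ah hahne) = ah := by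
    rw [aux_chart_mk f hahne, hfah, inv_one, one_smul]
  have hchB : chart f (Projectivization.mk ℝ bh hbhne) = bh := by
    rw [aux_chart_mk f hbhne, hfbh, inv_one, one_smul]
  have hmkeq := hext.2 (Projectivization.mk ℝ ah hahne) hfrA
    (Projectivization.mk ℝ bh hbhne) hfrB (by rw [hchA, hchB]; exact hseg)
  exact hab (aux_mk_inj f hahne hbhne hfah hfbh hmkeq)
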